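/- Let ω ⊂ Ω be open and let φ^loc ∈ H¹₀(ω) solve the localized problem a_ω(φ^loc, v) = (g, v)_{L²(ω)} for all v ∈ H¹₀(ω), while φ ∈ H¹₀(Ω) solves the global problem a(φ, v) = (g, v)_{L²(ω)} for all v ∈ H¹₀(Ω), where g ∈ L²(ω). Then for all v ∈ H¹₀(Ω), a(φ − φ^loc, v) = (g, γ₀⁻¹γ₀ v)_{L²(ω)}, where γ₀ is the trace onto ∂ω restricted to restrictions of H¹₀(Ω)-functions and γ₀⁻¹ is the A-harmonic extension into ω. -/

import Mathlib

/-- localization identity: with `V = (H¹₀(Ω), a)` an inner product space,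
`W = L²(ω)`, `R : V → W` the restriction to `ω`, `H0 ⊂ V` the subspace of `H¹₀(ω)`
functions extended by zero, `E : V → W` the map `v ↦ γ₀⁻¹ γ₀ v` (the `A`-harmonic
extension of the trace of `v|_ω`).  The decomposition hypothesis encodes
`v|_ω = γ₀⁻¹γ₀v + v₀` with `v₀ ∈ H¹₀(ω)` and `a_ω(φ^loc, v − v₀) = 0` (`A`-harmonicity).
If `φ` solves the global problem and `φ^loc ∈ H¹₀(ω)` solves the localized problem with
source `g ∈ L²(ω)`, then `a(φ − φ^loc, v) = (g, γ₀⁻¹γ₀ v)_{L²(ω)}` for all `v`. -/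
theorem statement6
    (V W : Type*)
    [NormedAddCommGroup V] [InnerProductSpace ℝ V]
    [NormedAddCommGroup W] [InnerProductSpace ℝ W]
    (H0 : Submodule ℝ V) (R E : V →ₗ[ℝ] W) (g : W) (φ φloc : V)
    (hφ : ∀ v : V, (inner ℝ φ v : ℝ) = (inner ℝ g (R v) : ℝ))
    (hmem : φloc ∈ H0)
    (hφloc : ∀ v ∈ H0, (inner ℝ φloc v : ℝ) = (inner ℝ g (R v) : ℝ))
    (hdecomp : ∀ v : V, ∃ v₀ ∈ H0,
      E v = R v - R v₀ ∧ (inner ℝ φloc (v - v₀) : ℝ) = 0) :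
    ∀ v : V, (inner ℝ (φ - φloc) v : ℝ) = (inner ℝ g (E v) : ℝ) := by
  intro v
  obtain ⟨v₀, hv₀, hE, horth⟩ := hdecomp v
  have h1 : (inner ℝ φloc v : ℝ) = inner ℝ φloc v₀ := by
    have := horth
    rw [inner_sub_right] at this
    linarith
  rw [inner_sub_left, hφ v, h1, hφloc v₀ hv₀, hE, inner_sub_right]
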